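/- Let V be the atomic Coulomb potential V(x) = −∑_i Z/|x_i| + ∑_{i<j} 1/|x_j−x_i| and let U_P(ε) = {x ∈ ℝ^{3N} : |x_j| > ε for j ∈ P, and |x_j − x_k| > ε for j ∈ P, k ∉ P}. Then for each ε > 0 there exists L_V > 0 such that for all multiindices α ∈ ℕ^{3M} with |α| ≥ 1 (in the directions x_{P_1},…,x_{P_M}), sup over ∩_s U_{P_s}(ε/2) of |∂^α_{x_𝐏} V| ≤ L_V^{|α|+1} |α|!. -/

import Mathlib

open Finset

/-- The vector in `ℝ^{3N}` whose `j`-th block is `e_s/√|P|` for `j ∈ P` and `0` else. -/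
noncomputable def dirVec (N : ℕ) (P : Finset (Fin N)) (s : Fin 3) :
    Fin N → EuclideanSpace ℝ (Fin 3) :=
  fun j => if j ∈ P then (Real.sqrt P.card)⁻¹ • EuclideanSpace.single s 1 else 0

/-- Directional derivative `∂_{x_P}^{e_s}`. -/
noncomputable def pderivP {N : ℕ} (P : Finset (Fin N)) (s : Fin 3)
    (f : (Fin N → EuclideanSpace ℝ (Fin 3)) → ℝ) :
    (Fin N → EuclideanSpace ℝ (Fin 3)) → ℝ :=
  fun x => fderiv ℝ f x (dirVec N P s)

/-- Iterated directional derivative `∂^α_{x_P}` for a multiindex `α ∈ ℕ³`. -/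
noncomputable def pderivPMulti {N : ℕ} (P : Finset (Fin N)) (α : Fin 3 → ℕ)
    (f : (Fin N → EuclideanSpace ℝ (Fin 3)) → ℝ) :
    (Fin N → EuclideanSpace ℝ (Fin 3)) → ℝ :=
  ((pderivP P 0)^[α 0] ∘ (pderivP P 1)^[α 1] ∘ (pderivP P 2)^[α 2]) f

/-- Iterated derivative `∂^{α₁}_{x_{P₁}} ⋯ ∂^{α_M}_{x_{P_M}}`. -/
noncomputable def pderivPFamily {N : ℕ} :
    (M : ℕ) → (Fin M → Finset (Fin N)) → (Fin M → Fin 3 → ℕ) →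
      ((Fin N → EuclideanSpace ℝ (Fin 3)) → ℝ) →
      (Fin N → EuclideanSpace ℝ (Fin 3)) → ℝ
  | 0, _, _, f => f
  | M + 1, P, α, f =>
      pderivPMulti (P 0) (α 0) (pderivPFamily M (P ∘ Fin.succ) (α ∘ Fin.succ) f)

/-- The region `U_P(ε)` where `|x_j| > ε` for `j ∈ P` and `|x_j − x_k| > ε`
for `j ∈ P`, `k ∉ P`. -/
def UP {N : ℕ} (P : Finset (Fin N)) (ε : ℝ) :
    Set (Fin N → EuclideanSpace ℝ (Fin 3)) :=
  {x | (∀ j ∈ P, ε < ‖x j‖) ∧ ∀ j ∈ P, ∀ k ∉ P, ε < ‖x j - x k‖}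

/-- The atomic Coulomb potential on `ℝ^{3N}`. -/
noncomputable def coulombV (N : ℕ) (Z : ℝ)
    (x : Fin N → EuclideanSpace ℝ (Fin 3)) : ℝ :=
  -(∑ i, Z / ‖x i‖) +
    ∑ p ∈ Finset.univ.filter (fun p : Fin N × Fin N => p.1 < p.2),
      1 / ‖x p.2 - x p.1‖

/- ===================== auxiliary development ===================== -/

noncomputable section CoulombAux

open RealInnerProductSpace

variable {F : Type*} [NormedAddCommGroup F] [InnerProductSpace ℝ F]


/-- A monomial `c * ∏_{w ∈ S} ⟪y,w⟫ * (⟪y,y⟫)^(-m/2)`. -/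
structure Mon (F : Type*) where
  c : ℝ
  S : List F
  m : ℕ

noncomputable def Mon.eval (μ : Mon F) (y : F) : ℝ :=
  μ.c * (μ.S.map (fun w => ⟪y, w⟫)).prod * (⟪y, y⟫) ^ (-(μ.m : ℝ) / 2)

def Mon.consS (w : F) (μ : Mon F) : Mon F := ⟨μ.c, w :: μ.S, μ.m⟩

def Mon.step (v : F) : Mon F → List (Mon F)
  | ⟨c, [], m⟩ => [⟨-(m : ℝ) * c, [v], m + 2⟩]
  | ⟨c, w :: S, m⟩ => ⟨c * ⟪v, w⟫, S, m⟩ :: (Mon.step v ⟨c, S, m⟩).map (Mon.consS w)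

/-- The candidate Fréchet derivative of `Mon.eval μ` at `y`. -/
noncomputable def Mon.SD (y : F) : Mon F → (F →L[ℝ] ℝ)
  | ⟨c, [], m⟩ =>
      (c * ((-(m : ℝ) / 2) * (⟪y, y⟫) ^ (-(m : ℝ) / 2 - 1))) • ((2 : ℝ) • (innerSL ℝ y))
  | ⟨c, w :: S, m⟩ =>
      ⟪y, w⟫ • Mon.SD y ⟨c, S, m⟩ + (Mon.eval ⟨c, S, m⟩ y) • (innerSL ℝ w)

lemma Mon.eval_cons (c : ℝ) (w : F) (S : List F) (m : ℕ) (y : F) :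
    Mon.eval ⟨c, w :: S, m⟩ y = ⟪y, w⟫ * Mon.eval ⟨c, S, m⟩ y := by
  simp only [Mon.eval, List.map_cons, List.prod_cons]; ring

lemma Mon.eval_consS (w : F) (μ : Mon F) (y : F) :
    Mon.eval (Mon.consS w μ) y = ⟪y, w⟫ * Mon.eval μ y := by
  obtain ⟨c, S, m⟩ := μ; exact Mon.eval_cons c w S m y

lemma Mon.SD_apply (μ : Mon F) (y v : F) :
    Mon.SD y μ v = ((Mon.step v μ).map (fun ν => Mon.eval ν y)).sum := by
  obtain ⟨c, S, m⟩ := μ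
  induction S with
  | nil =>
      simp only [Mon.SD, Mon.step, List.map_cons, List.map_nil, List.sum_cons, List.sum_nil,
        add_zero, Mon.eval, List.prod_cons, List.prod_nil]
      simp only [ContinuousLinearMap.smul_apply, innerSL_apply_apply, smul_eq_mul]
      push_cast
      ring_nf
  | cons w S ih =>
      have hmap : ∀ l : List (Mon F),
          ((l.map (Mon.consS w)).map (fun ν => Mon.eval ν y)).sum
            = ⟪y, w⟫ * ((l.map (fun ν => Mon.eval ν y)).sum) := by
        intro l
        induction l with
        | nil => simp
        | cons a l ihl =>
            simp only [List.map_cons, List.sum_cons, Mon.eval_consS, ihl]; ring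
      simp only [Mon.SD, Mon.step, List.map_cons, List.sum_cons,
        ContinuousLinearMap.add_apply, ContinuousLinearMap.smul_apply,
        innerSL_apply_apply, smul_eq_mul]
      rw [ih, hmap]
      have hev : Mon.eval ⟨c * ⟪v, w⟫, S, m⟩ y = ⟪v, w⟫ * Mon.eval ⟨c, S, m⟩ y := by
        simp only [Mon.eval]; ring
      rw [hev, real_inner_comm w v]
      ring

lemma hasFDerivAt_inner_self (y : F) :
    HasFDerivAt (fun z : F => ⟪z, z⟫) ((2 : ℝ) • (innerSL ℝ y)) y := by
  have h2 := (hasFDerivAt_id y).inner ℝ (hasFDerivAt_id y)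
  refine h2.congr_fderiv ?_
  ext v
  simp [fderivInnerCLM_apply, real_inner_comm v y, two_smul]

lemma Mon.hasFDerivAt_eval (μ : Mon F) (y : F) (hy : y ≠ 0) :
    HasFDerivAt (Mon.eval μ) (Mon.SD y μ) y := by
  obtain ⟨c, S, m⟩ := μ
  induction S with
  | nil =>
      have hq : (0:ℝ) < ⟪y, y⟫ := by
        rw [real_inner_self_eq_norm_sq]
        have : ‖y‖ ≠ 0 := norm_ne_zero_iff.mpr hy
        positivity
      have hr : HasDerivAt (fun s : ℝ => s ^ (-(m : ℝ) / 2))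
          ((-(m : ℝ) / 2) * (⟪y, y⟫) ^ (-(m : ℝ) / 2 - 1)) (⟪y, y⟫) :=
        Real.hasDerivAt_rpow_const (Or.inl hq.ne')
      have h := (HasDerivAt.comp_hasFDerivAt (f := fun z : F => ⟪z, z⟫) y hr
        (hasFDerivAt_inner_self y)).const_mul c
      have he : Mon.eval ⟨c, [], m⟩
          = fun z : F => c * ((fun s : ℝ => s ^ (-(m : ℝ) / 2)) ∘ fun z : F => ⟪z, z⟫) z := by
        funext z; simp [Mon.eval]
      rw [he]
      refine h.congr_fderiv ?_
      simp only [Mon.SD]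
      ext v
      simp only [ContinuousLinearMap.smul_apply, innerSL_apply_apply, smul_eq_mul]
      ring
  | cons w S ih =>
      have h1 : HasFDerivAt (fun z : F => ⟪z, w⟫) (innerSL ℝ w) y := by
        have : (fun z : F => ⟪z, w⟫) = fun z : F => (innerSL ℝ w) z := by
          funext z; simp [real_inner_comm]
        rw [this]
        exact (innerSL ℝ w).hasFDerivAt
      have h2 := h1.fun_mul ih
      have he : (fun z : F => ⟪z, w⟫ * Mon.eval ⟨c, S, m⟩ z) = Mon.eval ⟨c, w :: S, m⟩ := by
        funext z; rw [Mon.eval_cons]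
      rw [he] at h2
      simpa only [Mon.SD] using h2



noncomputable def monsN : List F → List (Mon F)
  | [] => [⟨1, [], 1⟩]
  | v :: L => (monsN L).flatMap (Mon.step v)

noncomputable def csum (l : List (Mon F)) : ℝ := (l.map (fun μ => |μ.c|)).sum

noncomputable def msum (l : List (Mon F)) (y : F) : ℝ := (l.map (fun μ => μ.eval y)).sum

lemma list_abs_sum_le (l : List ℝ) : |l.sum| ≤ (l.map (fun x => |x|)).sum := by
  induction l with
  | nil => simp
  | cons a l ih =>
      simp only [List.sum_cons, List.map_cons]
      exact (abs_add_le _ _).trans (by linarith)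

lemma Mon.step_mem {v : F} {μ ν : Mon F} (hν : ν ∈ Mon.step v μ) :
    (ν.m + μ.S.length = μ.m + ν.S.length + 1) ∧ (ν.S.length ≤ μ.S.length + 1) ∧
    (∀ u ∈ ν.S, u = v ∨ u ∈ μ.S) := by
  obtain ⟨c, S, m⟩ := μ
  induction S generalizing ν with
  | nil =>
      simp only [Mon.step, List.mem_singleton] at hν
      subst hν
      refine ⟨by simp <;> omega, by simp <;> omega, ?_⟩
      intro u hu; simp at hu; exact Or.inl hu
  | cons w S ih =>
      simp only [Mon.step, List.mem_cons, List.mem_map] at hν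
      rcases hν with rfl | ⟨ν', hν', rfl⟩
      · exact ⟨by simp <;> omega, by simp <;> omega, fun u hu => Or.inr (List.mem_cons_of_mem _ hu)⟩
      · obtain ⟨h1, h2, h3⟩ := ih hν'
        refine ⟨by simp [Mon.consS] at *; omega, by simp [Mon.consS] at *; omega, ?_⟩
        intro u hu
        simp only [Mon.consS, List.mem_cons] at hu
        rcases hu with rfl | hu
        · exact Or.inr (List.mem_cons_self)
        · rcases h3 u hu with h | h
          · exact Or.inl h
          · exact Or.inr (List.mem_cons_of_mem _ h)

lemma csum_append (a b : List (Mon F)) : csum (a ++ b) = csum a + csum b := by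
  simp [csum]

lemma csum_flatMap (l : List (Mon F)) (f : Mon F → List (Mon F)) :
    csum (l.flatMap f) = (l.map (fun μ => csum (f μ))).sum := by
  induction l with
  | nil => simp [csum]
  | cons a l ih => simp [List.flatMap_cons, csum_append, ih]

lemma csum_map_consS (w : F) (l : List (Mon F)) : csum (l.map (Mon.consS w)) = csum l := by
  simp [csum, List.map_map]; rfl

lemma csum_step_le {v : F} (hv : ‖v‖ ≤ 1) (μ : Mon F) (hS : ∀ w ∈ μ.S, ‖w‖ ≤ 1) :
    csum (Mon.step v μ) ≤ (μ.S.length + μ.m) * |μ.c| := by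
  obtain ⟨c, S, m⟩ := μ
  induction S with
  | nil =>
      simp [Mon.step, csum, abs_mul]
  | cons w S ih =>
      have hw : ‖w‖ ≤ 1 := hS w (List.mem_cons_self)
      have hS' : ∀ u ∈ S, ‖u‖ ≤ 1 := fun u hu => hS u (List.mem_cons_of_mem _ hu)
      have h1 : |⟪v, w⟫| ≤ 1 := by
        calc |⟪v, w⟫| ≤ ‖v‖ * ‖w‖ := abs_real_inner_le_norm v w
        _ ≤ 1 * 1 := by apply mul_le_mul hv hw (norm_nonneg w) zero_le_one
        _ = 1 := by ring
      have ihh : csum (Mon.step v ⟨c, S, m⟩) ≤ (S.length + m) * |c| := ih hS'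
      have key : csum (Mon.step v ⟨c, w :: S, m⟩)
          = |c * ⟪v, w⟫| + csum ((Mon.step v ⟨c, S, m⟩).map (Mon.consS w)) := by
        simp only [Mon.step, csum, List.map_cons, List.sum_cons]
      rw [key, csum_map_consS]
      have h2 : |c * ⟪v, w⟫| ≤ |c| := by
        rw [abs_mul]
        calc |c| * |⟪v, w⟫| ≤ |c| * 1 := mul_le_mul_of_nonneg_left h1 (abs_nonneg c)
        _ = |c| := mul_one _
      simp only [List.length_cons]
      push_cast
      nlinarith [abs_nonneg c]

lemma monsN_mem {L : List F} (hL : ∀ v ∈ L, ‖v‖ ≤ 1) {μ : Mon F} (hμ : μ ∈ monsN L) :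
    (∀ w ∈ μ.S, ‖w‖ ≤ 1) ∧ μ.S.length ≤ L.length ∧ μ.m = L.length + 1 + μ.S.length := by
  induction L generalizing μ with
  | nil =>
      simp only [monsN, List.mem_singleton] at hμ
      subst hμ
      exact ⟨by simp, by simp, by simp⟩
  | cons v L ih =>
      simp only [monsN, List.mem_flatMap] at hμ
      obtain ⟨ν, hν, hstep⟩ := hμ
      have hL' : ∀ u ∈ L, ‖u‖ ≤ 1 := fun u hu => hL u (List.mem_cons_of_mem _ hu)
      obtain ⟨ihn, ihlen, ihm⟩ := ih hL' hν
      obtain ⟨h1, h2, h3⟩ := Mon.step_mem hstep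
      refine ⟨?_, by simp; omega, by simp; omega⟩
      intro w hw
      rcases h3 w hw with rfl | hw'
      · exact hL w (List.mem_cons_self)
      · exact ihn w hw'

lemma monsN_csum {L : List F} (hL : ∀ v ∈ L, ‖v‖ ≤ 1) :
    csum (monsN L) ≤ 3 ^ L.length * (Nat.factorial L.length) := by
  induction L with
  | nil => simp [monsN, csum]
  | cons v L ih =>
      have hv : ‖v‖ ≤ 1 := hL v (List.mem_cons_self)
      have hL' : ∀ u ∈ L, ‖u‖ ≤ 1 := fun u hu => hL u (List.mem_cons_of_mem _ hu)
      have ihh := ih hL'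
      set n := L.length with hn
      have hstep : ∀ μ ∈ monsN L, csum (Mon.step v μ) ≤ (3 * (n:ℝ) + 1) * |μ.c| := by
        intro μ hμ
        obtain ⟨hnorm, hlen, hm⟩ := monsN_mem hL' hμ
        calc csum (Mon.step v μ) ≤ (μ.S.length + μ.m) * |μ.c| := csum_step_le hv μ hnorm
        _ ≤ (3 * (n:ℝ) + 1) * |μ.c| := by
            apply mul_le_mul_of_nonneg_right _ (abs_nonneg _)
            have h : μ.S.length + μ.m ≤ 3 * n + 1 := by omega
            calc ((μ.S.length : ℝ) + μ.m) = ((μ.S.length + μ.m : ℕ) : ℝ) := by push_cast; ring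
            _ ≤ ((3 * n + 1 : ℕ) : ℝ) := Nat.cast_le.mpr h
            _ = 3 * (n:ℝ) + 1 := by push_cast; ring
      calc csum (monsN (v :: L)) = ((monsN L).map (fun μ => csum (Mon.step v μ))).sum := by
            simp only [monsN]; exact csum_flatMap _ _
      _ ≤ ((monsN L).map (fun μ => (3 * (n:ℝ) + 1) * |μ.c|)).sum := List.sum_le_sum hstep
      _ = (3 * (n:ℝ) + 1) * csum (monsN L) := by rw [List.sum_map_mul_left]; rfl
      _ ≤ (3 * (n:ℝ) + 1) * (3 ^ n * n.factorial) := by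
          apply mul_le_mul_of_nonneg_left ihh
          positivity
      _ ≤ (3 * ((n:ℝ) + 1)) * (3 ^ n * n.factorial) := by
          apply mul_le_mul_of_nonneg_right (by linarith) (by positivity)
      _ = 3 ^ (v :: L).length * (Nat.factorial (v :: L).length) := by
          simp only [List.length_cons, pow_succ, Nat.factorial_succ, ← hn]
          push_cast
          ring

lemma rpow_inner_eq {y : F} (hy : y ≠ 0) (m : ℕ) :
    (⟪y, y⟫ : ℝ) ^ (-(m : ℝ) / 2) = (‖y‖⁻¹) ^ m := by
  rw [real_inner_self_eq_norm_sq]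
  have h0 : (0:ℝ) < ‖y‖ := norm_pos_iff.mpr hy
  rw [← Real.rpow_natCast ‖y‖ 2, ← Real.rpow_mul h0.le]
  have : ((2:ℕ) : ℝ) * (-(m : ℝ) / 2) = -(m : ℝ) := by push_cast; ring
  rw [this, Real.rpow_neg h0.le, Real.rpow_natCast, inv_pow]

lemma abs_prod_inner_le {y : F} (S : List F) (hS : ∀ w ∈ S, ‖w‖ ≤ 1) :
    |(S.map (fun w => (⟪y, w⟫ : ℝ))).prod| ≤ ‖y‖ ^ S.length := by
  induction S with
  | nil => simp
  | cons w S ih =>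
      have hw : ‖w‖ ≤ 1 := hS w (List.mem_cons_self)
      have hS' : ∀ u ∈ S, ‖u‖ ≤ 1 := fun u hu => hS u (List.mem_cons_of_mem _ hu)
      simp only [List.map_cons, List.prod_cons, List.length_cons, abs_mul, pow_succ]
      have h1 : |(⟪y, w⟫ : ℝ)| ≤ ‖y‖ := by
        calc |(⟪y, w⟫ : ℝ)| ≤ ‖y‖ * ‖w‖ := abs_real_inner_le_norm y w
        _ ≤ ‖y‖ * 1 := mul_le_mul_of_nonneg_left hw (norm_nonneg y)
        _ = ‖y‖ := mul_one _
      calc |(⟪y, w⟫ : ℝ)| * |(S.map (fun w => (⟪y, w⟫ : ℝ))).prod| ≤ ‖y‖ * ‖y‖ ^ S.length := by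
            apply mul_le_mul h1 (ih hS') (abs_nonneg _) (norm_nonneg y)
      _ = ‖y‖ ^ S.length * ‖y‖ := by ring

lemma Mon.eval_abs_le {μ : Mon F} {y : F} (hy : y ≠ 0)
    (hnorm : ∀ w ∈ μ.S, ‖w‖ ≤ 1) {n : ℕ} (hm : μ.m = n + 1 + μ.S.length) :
    |μ.eval y| ≤ |μ.c| * (‖y‖⁻¹) ^ (n + 1) := by
  have h0 : (0:ℝ) < ‖y‖ := norm_pos_iff.mpr hy
  rw [Mon.eval, abs_mul, abs_mul, rpow_inner_eq hy]
  have h1 : |(‖y‖⁻¹) ^ μ.m| = (‖y‖⁻¹) ^ μ.m := abs_of_nonneg (by positivity)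
  rw [h1, hm]
  calc |μ.c| * |(μ.S.map (fun w => (⟪y, w⟫ : ℝ))).prod| * ‖y‖⁻¹ ^ (n + 1 + μ.S.length)
      ≤ |μ.c| * ‖y‖ ^ μ.S.length * ‖y‖⁻¹ ^ (n + 1 + μ.S.length) := by
        apply mul_le_mul_of_nonneg_right _ (by positivity)
        exact mul_le_mul_of_nonneg_left (abs_prod_inner_le μ.S hnorm) (abs_nonneg _)
  _ = |μ.c| * (‖y‖ * ‖y‖⁻¹) ^ μ.S.length * ‖y‖⁻¹ ^ (n + 1) := by ring
  _ = |μ.c| * (‖y‖⁻¹) ^ (n + 1) := by rw [mul_inv_cancel₀ h0.ne']; ring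

lemma msum_abs_le {L : List F} (hL : ∀ v ∈ L, ‖v‖ ≤ 1) {y : F} {R : ℝ} (hR : 0 < R)
    (hy : R < ‖y‖) :
    |msum (monsN L) y| ≤ 3 ^ L.length * (Nat.factorial L.length) * (R⁻¹) ^ (L.length + 1) := by
  have hy0 : y ≠ 0 := by
    intro h; rw [h, norm_zero] at hy; linarith
  have hyR : ‖y‖⁻¹ ≤ R⁻¹ := by
    apply inv_anti₀ hR hy.le
  have habs : ∀ μ ∈ monsN L, |μ.eval y| ≤ |μ.c| * (R⁻¹) ^ (L.length + 1) := by
    intro μ hμ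
    obtain ⟨hnorm, _, hm⟩ := monsN_mem hL hμ
    calc |μ.eval y| ≤ |μ.c| * (‖y‖⁻¹) ^ (L.length + 1) := Mon.eval_abs_le hy0 hnorm hm
    _ ≤ |μ.c| * (R⁻¹) ^ (L.length + 1) := by
        apply mul_le_mul_of_nonneg_left _ (abs_nonneg _)
        exact pow_le_pow_left₀ (by positivity) hyR _
  calc |msum (monsN L) y| ≤ ((monsN L).map (fun μ => |μ.eval y|)).sum := by
        rw [msum]
        refine (list_abs_sum_le _).trans ?_
        rw [List.map_map]
        exact le_of_eq rfl
  _ ≤ ((monsN L).map (fun μ => |μ.c| * (R⁻¹) ^ (L.length + 1))).sum := List.sum_le_sum habs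
  _ = csum (monsN L) * (R⁻¹) ^ (L.length + 1) := by
      rw [csum, ← List.sum_map_mul_right]
  _ ≤ 3 ^ L.length * (Nat.factorial L.length) * (R⁻¹) ^ (L.length + 1) := by
      apply mul_le_mul_of_nonneg_right (monsN_csum hL) (by positivity)


section Chains
variable {X : Type*} [NormedAddCommGroup X] [NormedSpace ℝ X]


noncomputable def pderivVec (v : X) (f : X → ℝ) : X → ℝ := fun x => fderiv ℝ f x v

noncomputable def dchainO : List X → (X → ℝ) → X → ℝ
  | [], f => f
  | v :: L, f => pderivVec v (dchainO L f)

lemma dchainO_append (L₁ L₂ : List X) (f : X → ℝ) :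
    dchainO (L₁ ++ L₂) f = dchainO L₁ (dchainO L₂ f) := by
  induction L₁ with
  | nil => rfl
  | cons v L ih => simp [dchainO, ih]

lemma iterate_pderivVec (v : X) (n : ℕ) (f : X → ℝ) :
    (pderivVec v)^[n] f = dchainO (List.replicate n v) f := by
  induction n with
  | zero => rfl
  | succ n ih => rw [Function.iterate_succ_apply', ih, List.replicate_succ]; rfl

/-- If a function has a derivative at `x` and is invariant under translations
along `v`, the derivative kills `v`. -/
lemma hasFDerivAt_inv_dir {b : X → ℝ} {x v : X} {A : X →L[ℝ] ℝ}
    (hA : HasFDerivAt b A x) (hinv : ∀ z : X, ∀ t : ℝ, b (z + t • v) = b z) :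
    A v = 0 := by
  have hφ : HasDerivAt (fun t : ℝ => x + t • v) v 0 := by
    simpa using ((hasDerivAt_id (0:ℝ)).smul_const v).const_add x
  have hA' : HasFDerivAt b A (x + (0:ℝ) • v) := by simpa using hA
  have hcomp : HasDerivAt (fun t : ℝ => b (x + t • v)) (A v) 0 :=
    hA'.comp_hasDerivAt 0 hφ
  have hconst : (fun t : ℝ => b (x + t • v)) = fun _ => b x := by
    funext t; exact hinv x t
  rw [hconst] at hcomp
  exact hcomp.unique (hasDerivAt_const _ _)

/-- Derivative of a function vanishing on the complement of a set with dense
complement (near x) is zero. -/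
lemma fderiv_vanish_of_dense {Sb : Set X}
    (hdense : ∀ (z : X) (r : ℝ), 0 < r → ∃ y, y ∉ Sb ∧ dist y z < r)
    {g : X → ℝ} {A : X →L[ℝ] ℝ} {x : X} (hg : HasFDerivAt g A x)
    (h0 : ∀ᶠ y in nhds x, y ∉ Sb → g y = 0) : ∀ v, A v = 0 := by
  obtain ⟨r0, hr0, hball⟩ := Metric.eventually_nhds_iff_ball.mp h0
  -- first : g x = 0
  have hgx : g x = 0 := by
    by_contra hne
    have hcont : ContinuousAt g x := hg.continuousAt
    have hev : ∀ᶠ y in nhds x, |g y - g x| < |g x| / 2 := by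
      have : Metric.ball (g x) (|g x| / 2) ∈ nhds (g x) :=
        Metric.ball_mem_nhds _ (by positivity)
      filter_upwards [hcont.preimage_mem_nhds this] with y hy
      simpa [Real.dist_eq] using hy
    obtain ⟨r1, hr1, hb1⟩ := Metric.eventually_nhds_iff_ball.mp hev
    obtain ⟨y, hyS, hyd⟩ := hdense x (min r0 r1) (lt_min hr0 hr1)
    have h1 : g y = 0 := hball y (Metric.mem_ball.mpr (hyd.trans_le (min_le_left _ _))) hyS
    have h2 := hb1 y (Metric.mem_ball.mpr (hyd.trans_le (min_le_right _ _)))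
    rw [h1] at h2
    simp only [zero_sub, abs_neg] at h2
    linarith [abs_nonneg (g x)]
  intro v
  have key : ∀ ε : ℝ, 0 < ε → ε ≤ 1 → |A v| ≤ ε * (‖A‖ + ‖v‖ + 1) := by
    intro ε hε hε1
    have hlo := (hasFDerivAt_iff_isLittleO_nhds_zero.mp hg).def hε
    rw [Filter.eventually_iff_exists_mem] at hlo
    obtain ⟨U, hU, hUp⟩ := hlo
    obtain ⟨δ, hδ, hδball⟩ := Metric.mem_nhds_iff.mp hU
    set t : ℝ := (min δ r0) / (2 * (‖v‖ + 2)) with ht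
    have hvpos : (0:ℝ) < ‖v‖ + 2 := by positivity
    have htpos : 0 < t := by
      apply div_pos (lt_min hδ hr0); positivity
    obtain ⟨y, hyS, hyd⟩ := hdense (x + t • v) (ε * t) (by positivity)
    set z := y - x with hz
    have hznorm : ‖z‖ ≤ t * ‖v‖ + ε * t := by
      have : z = (y - (x + t • v)) + t • v := by rw [hz]; abel
      rw [this]
      calc ‖(y - (x + t • v)) + t • v‖ ≤ ‖y - (x + t • v)‖ + ‖t • v‖ := norm_add_le _ _
      _ ≤ ε * t + t * ‖v‖ := by
          apply add_le_add
          · rw [← dist_eq_norm]; exact hyd.le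
          · rw [norm_smul, Real.norm_eq_abs, abs_of_pos htpos]
      _ = t * ‖v‖ + ε * t := by ring
    have hzsmall : ‖z‖ < δ ∧ ‖z‖ < r0 := by
      have h1 : t * ‖v‖ + ε * t ≤ t * (‖v‖ + 1) := by nlinarith
      have h2 : t * (‖v‖ + 2) = (min δ r0) / 2 := by
        rw [ht]; field_simp
      have h3 : ‖z‖ ≤ (min δ r0) / 2 := by
        calc ‖z‖ ≤ t * ‖v‖ + ε * t := hznorm
        _ ≤ t * (‖v‖ + 1) := h1
        _ ≤ t * (‖v‖ + 2) := by nlinarith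
        _ = (min δ r0) / 2 := h2
      constructor
      · calc ‖z‖ ≤ (min δ r0)/2 := h3
        _ < min δ r0 := by
            have := lt_min hδ hr0; linarith
        _ ≤ δ := min_le_left _ _
      · calc ‖z‖ ≤ (min δ r0)/2 := h3
        _ < min δ r0 := by
            have := lt_min hδ hr0; linarith
        _ ≤ r0 := min_le_right _ _
    have hy0 : g y = 0 := by
      apply hball y _ hyS
      rw [Metric.mem_ball, dist_eq_norm]
      have : y - x = z := rfl
      rw [this]
      exact hzsmall.2
    have hUz : z ∈ U := hδball (by rw [Metric.mem_ball, dist_zero_right]; exact hzsmall.1)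
    have hlittle := hUp z hUz
    simp only [Real.norm_eq_abs] at hlittle
    -- hlittle : |g (x + z) - g x - A z| ≤ ε * ‖z‖
    have hxz : x + z = y := by rw [hz]; abel
    rw [hxz, hy0, hgx] at hlittle
    simp only [zero_sub, abs_neg, sub_zero] at hlittle
    -- |A z| ≤ ε ‖z‖
    have hAz : |A z| ≤ ε * ‖z‖ := hlittle
    have hsplit : A (t • v) = A z - A (z - t • v) := by
      rw [map_sub A z (t • v)]; ring
    have hAtv : |A (t • v)| ≤ ε * ‖z‖ + ‖A‖ * (ε * t) := by
      rw [hsplit]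
      calc |A z - A (z - t • v)| ≤ |A z| + |A (z - t • v)| := abs_sub _ _
      _ ≤ ε * ‖z‖ + ‖A‖ * ‖z - t • v‖ := by
          apply add_le_add hAz (A.le_opNorm _)
      _ ≤ ε * ‖z‖ + ‖A‖ * (ε * t) := by
          apply add_le_add_right
          apply mul_le_mul_of_nonneg_left _ (norm_nonneg A)
          have : z - t • v = y - (x + t • v) := by rw [hz]; abel
          rw [this, ← dist_eq_norm]
          exact hyd.le
    have hAv : t * |A v| ≤ t * (ε * (‖A‖ + ‖v‖ + 1)) := by
      have h4 : |A (t • v)| = t * |A v| := by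
        rw [map_smul, smul_eq_mul, abs_mul, abs_of_pos htpos]
      rw [← h4]
      calc |A (t • v)| ≤ ε * ‖z‖ + ‖A‖ * (ε * t) := hAtv
      _ ≤ ε * (t * ‖v‖ + ε * t) + ‖A‖ * (ε * t) := by
          apply add_le_add_left
          exact mul_le_mul_of_nonneg_left hznorm hε.le
      _ ≤ t * (ε * (‖A‖ + ‖v‖ + 1)) := by
          have hsq : ε * (ε * t) ≤ 1 * (ε * t) :=
            mul_le_mul_of_nonneg_right hε1 (by positivity)
          nlinarith [hsq, norm_nonneg A, norm_nonneg v]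
    have := le_of_mul_le_mul_left hAv htpos
    linarith [this]
  by_contra hne
  have hpos : 0 < |A v| := abs_pos.mpr hne
  set C : ℝ := ‖A‖ + ‖v‖ + 1 with hC
  have hCpos : 0 < C := by rw [hC]; positivity
  set ε := min 1 (|A v| / (2 * C)) with hε
  have hεpos : 0 < ε := lt_min one_pos (by positivity)
  have h := key ε hεpos (min_le_left _ _)
  have hh : ε * C ≤ |A v| / 2 := by
    calc ε * C ≤ (|A v| / (2 * C)) * C := by
          apply mul_le_mul_of_nonneg_right (min_le_right _ _) hCpos.le
    _ = |A v| / 2 := by field_simp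
  have hfin := h.trans hh
  linarith [hfin, hpos]

lemma interior_union_empty {A B : Set X} (hA : IsClosed A)
    (hiA : interior A = ∅) (hiB : interior B = ∅) : interior (A ∪ B) = ∅ := by
  by_contra hne
  obtain ⟨x, hx⟩ := Set.nonempty_iff_ne_empty.mpr hne
  set U := interior (A ∪ B) with hU
  have hUopen : IsOpen U := isOpen_interior
  have hUsub : U ⊆ A ∪ B := interior_subset
  have h1 : U ∩ Aᶜ ⊆ interior B := by
    apply interior_maximal _ (hUopen.inter hA.isOpen_compl)
    intro y ⟨hy1, hy2⟩
    rcases hUsub hy1 with h | h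
    · exact absurd h hy2
    · exact h
  rw [hiB] at h1
  have h2 : U ⊆ A := by
    intro y hy
    by_contra hyA
    exact h1 ⟨hy, hyA⟩
  have h3 : U ⊆ interior A := interior_maximal h2 hUopen
  rw [hiA] at h3
  exact h3 hx

lemma dense_of_interior_empty {Sb : Set X} (hi : interior Sb = ∅) :
    ∀ (z : X) (r : ℝ), 0 < r → ∃ y, y ∉ Sb ∧ dist y z < r := by
  intro z r hr
  by_contra hcon
  push_neg at hcon
  have hsub : Metric.ball z r ⊆ Sb := by
    intro y hy
    rw [Metric.mem_ball] at hy
    by_contra hyn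
    exact absurd hy (not_lt.mpr (hcon y hyn))
  have : Metric.ball z r ⊆ interior Sb := interior_maximal hsub Metric.isOpen_ball
  rw [hi] at this
  exact this (Metric.mem_ball_self hr)


end Chains

section MainDev



abbrev E3 := EuclideanSpace ℝ (Fin 3)
abbrev XN (N : ℕ) := Fin N → E3
abbrev TermIdx (N : ℕ) := Sum (Fin N) (Fin N × Fin N)

noncomputable def ellT {N : ℕ} : TermIdx N → (XN N →L[ℝ] E3)
  | Sum.inl i => ContinuousLinearMap.proj i
  | Sum.inr p => (ContinuousLinearMap.proj p.2 : XN N →L[ℝ] E3) -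
      (ContinuousLinearMap.proj p.1 : XN N →L[ℝ] E3)

noncomputable def cT (N : ℕ) (Z : ℝ) : TermIdx N → ℝ
  | Sum.inl _ => -Z
  | Sum.inr p => if p.1 < p.2 then 1 else 0

lemma ellT_inl {N : ℕ} (i : Fin N) (x : XN N) : ellT (Sum.inl i) x = x i := by
  simp [ellT]
lemma ellT_inr {N : ℕ} (p : Fin N × Fin N) (x : XN N) :
    ellT (Sum.inr p) x = x p.2 - x p.1 := by
  simp [ellT]

lemma dirVec_mem {N : ℕ} {P0 : Finset (Fin N)} {j : Fin N} (hj : j ∈ P0) (i : Fin 3) :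
    dirVec N P0 i j = (Real.sqrt P0.card)⁻¹ • EuclideanSpace.single i 1 := by
  simp only [dirVec, if_pos hj]

lemma dirVec_not_mem {N : ℕ} {P0 : Finset (Fin N)} {j : Fin N} (hj : j ∉ P0) (i : Fin 3) :
    dirVec N P0 i j = 0 := by
  simp only [dirVec, if_neg hj]

lemma coulombV_eq {N : ℕ} (Z : ℝ) (x : XN N) :
    coulombV N Z x = ∑ t : TermIdx N, cT N Z t * ‖ellT t x‖⁻¹ := by
  rw [coulombV, Fintype.sum_sum_type]
  congr 1
  · rw [← Finset.sum_neg_distrib]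
    apply Finset.sum_congr rfl
    intro i _
    rw [ellT_inl, cT, div_eq_mul_inv]
    ring
  · rw [Finset.sum_filter]
    apply Finset.sum_congr rfl
    intro p _
    rw [ellT_inr, cT]
    by_cases h : p.1 < p.2 <;> simp [h, one_div]

lemma norm_dirVec_apply_le {N : ℕ} {P0 : Finset (Fin N)} (hP0 : P0.Nonempty)
    (i : Fin 3) (j : Fin N) : ‖dirVec N P0 i j‖ ≤ 1 := by
  by_cases hj : j ∈ P0
  · rw [dirVec_mem hj, norm_smul, EuclideanSpace.norm_single]
    have hc : (1:ℝ) ≤ Real.sqrt P0.card := by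
      rw [show (1:ℝ) = Real.sqrt 1 by simp]
      apply Real.sqrt_le_sqrt
      exact_mod_cast Finset.card_pos.mpr hP0
    have h2 : |(Real.sqrt P0.card)⁻¹| = (Real.sqrt P0.card)⁻¹ := by
      apply abs_of_nonneg; positivity
    rw [Real.norm_eq_abs, h2, norm_one, mul_one]
    rw [inv_le_one_iff₀]
    right; exact hc
  · rw [dirVec_not_mem hj, norm_zero]; norm_num

lemma norm_ellT_dirVec_le {N : ℕ} {P0 : Finset (Fin N)} (hP0 : P0.Nonempty)
    (t : TermIdx N) (i : Fin 3) : ‖ellT t (dirVec N P0 i)‖ ≤ 1 := by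
  match t with
  | Sum.inl j => rw [ellT_inl]; exact norm_dirVec_apply_le hP0 i j
  | Sum.inr p =>
      rw [ellT_inr]
      by_cases h2 : p.2 ∈ P0 <;> by_cases h1 : p.1 ∈ P0
      · rw [dirVec_mem h2, dirVec_mem h1, sub_self, norm_zero]; norm_num
      · rw [dirVec_not_mem h1, sub_zero]
        exact norm_dirVec_apply_le hP0 i p.2
      · rw [dirVec_not_mem h2, zero_sub, norm_neg]
        exact norm_dirVec_apply_le hP0 i p.1
      · rw [dirVec_not_mem h2, dirVec_not_mem h1, sub_self, norm_zero]; norm_num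

/-- `good` terms feel at least one cluster direction. -/
def goodT {N M : ℕ} (P : Fin M → Finset (Fin N)) (t : TermIdx N) : Prop :=
  ∃ (s : Fin M) (i : Fin 3), ellT t (dirVec N (P s) i) ≠ 0

lemma dirVec_ne_zero_of_mem {N : ℕ} {P0 : Finset (Fin N)} {j : Fin N} (hj : j ∈ P0)
    (i : Fin 3) : dirVec N P0 i j ≠ 0 := by
  rw [dirVec_mem hj]
  intro h
  have hc : (0:ℝ) < Real.sqrt P0.card := by
    apply Real.sqrt_pos.mpr
    exact_mod_cast Finset.card_pos.mpr ⟨j, hj⟩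
  have := congrArg (fun z => ‖z‖) h
  simp only [norm_smul, EuclideanSpace.norm_single, norm_one, mul_one, norm_zero,
    Real.norm_eq_abs] at this
  rw [abs_of_nonneg (by positivity)] at this
  exact absurd this (by positivity)

lemma goodT_norm_lb {N M : ℕ} {P : Fin M → Finset (Fin N)} {ρ : ℝ}
    {t : TermIdx N} (hg : goodT P t) {x : XN N} (hx : x ∈ ⋂ s, UP (P s) ρ) :
    ρ < ‖ellT t x‖ := by
  obtain ⟨s, i, hne⟩ := hg
  have hxs : x ∈ UP (P s) ρ := Set.mem_iInter.mp hx s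
  obtain ⟨hx1, hx2⟩ := hxs
  match t with
  | Sum.inl j =>
      rw [ellT_inl] at hne ⊢
      have hj : j ∈ P s := by
        by_contra hj
        rw [dirVec_not_mem hj] at hne
        exact hne rfl
      exact hx1 j hj
  | Sum.inr p =>
      rw [ellT_inr] at hne ⊢
      by_cases h2 : p.2 ∈ P s <;> by_cases h1 : p.1 ∈ P s
      · rw [dirVec_mem h2, dirVec_mem h1, sub_self] at hne; exact absurd rfl hne
      · exact hx2 p.2 h2 p.1 h1
      · rw [norm_sub_rev]
        exact hx2 p.1 h1 p.2 h2
      · rw [dirVec_not_mem h2, dirVec_not_mem h1, sub_self] at hne; exact absurd rfl hne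

lemma badT_dir_zero {N M : ℕ} {P : Fin M → Finset (Fin N)} {t : TermIdx N}
    (hb : ¬ goodT P t) (s : Fin M) (i : Fin 3) : ellT t (dirVec N (P s) i) = 0 := by
  rw [goodT] at hb
  push_neg at hb
  exact hb s i


/- ======== seed monomial and msum calculus ======== -/

lemma eval_seed (y : E3) : Mon.eval ⟨1, [], 1⟩ y = ‖y‖⁻¹ := by
  rcases eq_or_ne y 0 with rfl | hy
  · simp [Mon.eval, Real.zero_rpow (by norm_num : (-(1:ℝ))/2 ≠ 0)]
  · rw [Mon.eval]
    simp only [List.map_nil, List.prod_nil, mul_one, one_mul]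
    have h1 := rpow_inner_eq (F := E3) hy 1
    rw [pow_one] at h1
    norm_num at h1 ⊢
    exact h1

lemma msum_append (a b : List (Mon E3)) (y : E3) :
    msum (a ++ b) y = msum a y + msum b y := by
  simp [msum]

lemma msum_flatMap (l : List (Mon E3)) (w : E3) (y : E3) :
    msum (l.flatMap (Mon.step w)) y
      = (l.map (fun μ => ((Mon.step w μ).map (fun ν => Mon.eval ν y)).sum)).sum := by
  induction l with
  | nil => simp [msum]
  | cons a l ih =>
      rw [List.flatMap_cons, msum_append, ih]
      simp [msum]

lemma clm_list_sum_apply (l : List (Mon E3)) (y : E3) (w : E3) :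
    ((l.map (Mon.SD y)).sum : E3 →L[ℝ] ℝ) w = (l.map (fun μ => Mon.SD y μ w)).sum := by
  induction l with
  | nil => simp
  | cons a l ih => simp [ih]

lemma hasFDerivAt_msum (l : List (Mon E3)) {y : E3} (hy : y ≠ 0) :
    HasFDerivAt (msum l) ((l.map (Mon.SD y)).sum) y := by
  induction l with
  | nil =>
      have : msum ([] : List (Mon E3)) = fun _ => (0:ℝ) := by funext z; simp [msum]
      rw [this]
      simpa using hasFDerivAt_const (0:ℝ) y
  | cons a l ih =>
      have : msum (a :: l) = fun z => Mon.eval a z + msum l z := by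
        funext z; simp [msum]
      rw [this]
      simpa using (Mon.hasFDerivAt_eval a y hy).fun_add ih

/- ======== bad terms: the exceptional set ======== -/

open Classical in
noncomputable def badC {N : ℕ} (Z : ℝ) {M : ℕ} (P : Fin M → Finset (Fin N)) :
    Finset (TermIdx N) :=
  Finset.univ.filter (fun t => ¬ goodT P t ∧ cT N Z t ≠ 0)

lemma mem_badC {N M : ℕ} {Z : ℝ} {P : Fin M → Finset (Fin N)} {t : TermIdx N} :
    t ∈ badC Z P ↔ (¬ goodT P t ∧ cT N Z t ≠ 0) := by
  simp [badC]

def SbSet {N : ℕ} (Z : ℝ) {M : ℕ} (P : Fin M → Finset (Fin N)) : Set (XN N) :=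
  ⋃ t ∈ badC Z P, {x : XN N | ellT t x = 0}

lemma isClosed_SbSet {N M : ℕ} (Z : ℝ) (P : Fin M → Finset (Fin N)) :
    IsClosed (SbSet Z P) := by
  apply Set.Finite.isClosed_biUnion (Finset.finite_toSet _)
  intro t _
  exact isClosed_eq (ellT t).continuous continuous_const

lemma single_ne_zero' : (EuclideanSpace.single (0 : Fin 3) (1:ℝ)) ≠ 0 := by
  intro h
  have := congrArg (fun z => ‖z‖) h
  simp [EuclideanSpace.norm_single] at this

lemma ellT_witness {N M : ℕ} {Z : ℝ} {P : Fin M → Finset (Fin N)} {t : TermIdx N}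
    (ht : t ∈ badC Z P) : ∃ u : XN N, ellT t u ≠ 0 := by
  obtain ⟨-, hc⟩ := mem_badC.mp ht
  match t with
  | Sum.inl i =>
      refine ⟨fun _ => EuclideanSpace.single 0 1, ?_⟩
      rw [ellT_inl]
      exact single_ne_zero'
  | Sum.inr p =>
      have hlt : p.1 < p.2 := by
        by_contra h
        rw [cT] at hc
        exact hc (if_neg h)
      refine ⟨Function.update (0 : XN N) p.2 (EuclideanSpace.single 0 1), ?_⟩
      rw [ellT_inr, Function.update_self, Function.update_of_ne hlt.ne _ _]
      simpa using single_ne_zero'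

lemma interior_ker_empty {N : ℕ} {t : TermIdx N} (h : ∃ u : XN N, ellT t u ≠ 0) :
    interior {x : XN N | ellT t x = 0} = ∅ := by
  obtain ⟨u, hu⟩ := h
  by_contra hne
  obtain ⟨x, hx⟩ := Set.nonempty_iff_ne_empty.mpr hne
  obtain ⟨r, hr, hball⟩ := Metric.mem_nhds_iff.mp (mem_interior_iff_mem_nhds.mp hx)
  set δ : ℝ := r / (2 * (‖u‖ + 1)) with hδ
  have hupos : (0:ℝ) < ‖u‖ + 1 := by positivity
  have hδpos : 0 < δ := by positivity
  have hx0 : ellT t x = 0 := hball (Metric.mem_ball_self hr)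
  have hx1 : ellT t (x + δ • u) = 0 := by
    apply hball
    rw [Metric.mem_ball, dist_eq_norm]
    have : x + δ • u - x = δ • u := by abel
    rw [this, norm_smul, Real.norm_eq_abs, abs_of_pos hδpos]
    calc δ * ‖u‖ < δ * (‖u‖ + 1) := by nlinarith
    _ = r / 2 := by rw [hδ]; field_simp
    _ < r := by linarith
  rw [map_add, hx0, map_smul, zero_add] at hx1
  rcases smul_eq_zero.mp hx1 with h | h
  · exact absurd h hδpos.ne'
  · exact hu h

lemma interior_SbSet {N M : ℕ} (Z : ℝ) (P : Fin M → Finset (Fin N)) :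
    interior (SbSet Z P) = ∅ := by
  rw [SbSet]
  have key : ∀ (G : Finset (TermIdx N)), (∀ t ∈ G, ∃ u : XN N, ellT t u ≠ 0) →
      IsClosed (⋃ t ∈ G, {x : XN N | ellT t x = 0}) ∧
      interior (⋃ t ∈ G, {x : XN N | ellT t x = 0}) = ∅ := by
    intro G
    induction G using Finset.induction_on with
    | empty => intro _; simp
    | insert a G ha ih =>
        intro hw
        rw [Finset.set_biUnion_insert]
        have hKa : IsClosed {x : XN N | ellT a x = 0} :=
          isClosed_eq (ellT a).continuous continuous_const
        have hopen := ih (fun t ht => hw t (Finset.mem_insert_of_mem ht))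
        constructor
        · exact hKa.union hopen.1
        · exact interior_union_empty hKa
            (interior_ker_empty (hw a (Finset.mem_insert_self _ _))) hopen.2
  exact (key (badC Z P) (fun t ht => ellT_witness ht)).2

/- ======== openness of the region ======== -/

lemma isOpen_UP {N : ℕ} (P0 : Finset (Fin N)) (ρ : ℝ) : IsOpen (UP P0 ρ) := by
  have : UP P0 ρ = (⋂ j : Fin N, {x : XN N | j ∈ P0 → ρ < ‖x j‖}) ∩
      (⋂ j : Fin N, ⋂ k : Fin N, {x : XN N | j ∈ P0 → k ∉ P0 → ρ < ‖x j - x k‖}) := by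
    ext x
    simp only [UP, Set.mem_setOf_eq, Set.mem_inter_iff, Set.mem_iInter]
    exact ⟨fun h => ⟨fun j hj => h.1 j hj, fun j k hj hk => h.2 j hj k hk⟩,
      fun h => ⟨fun j hj => h.1 j hj, fun j hj k hk => h.2 j k hj hk⟩⟩
  rw [this]
  apply IsOpen.inter
  · apply isOpen_iInter_of_finite
    intro j
    by_cases hj : j ∈ P0
    · have : {x : XN N | j ∈ P0 → ρ < ‖x j‖} = {x : XN N | ρ < ‖x j‖} := by
        ext x; simp [hj]
      rw [this]
      exact isOpen_lt continuous_const ((continuous_apply j).norm)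
    · have : {x : XN N | j ∈ P0 → ρ < ‖x j‖} = Set.univ := by
        ext x; simp [hj]
      rw [this]; exact isOpen_univ
  · apply isOpen_iInter_of_finite
    intro j
    apply isOpen_iInter_of_finite
    intro k
    by_cases hj : j ∈ P0 <;> by_cases hk : k ∉ P0
    · have : {x : XN N | j ∈ P0 → k ∉ P0 → ρ < ‖x j - x k‖}
          = {x : XN N | ρ < ‖x j - x k‖} := by
        ext x; simp [hj, hk]
      rw [this]
      exact isOpen_lt continuous_const (((continuous_apply j).sub (continuous_apply k)).norm)
    · have : {x : XN N | j ∈ P0 → k ∉ P0 → ρ < ‖x j - x k‖} = Set.univ := by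
        ext x; simp [hj, hk]
      rw [this]; exact isOpen_univ
    · have : {x : XN N | j ∈ P0 → k ∉ P0 → ρ < ‖x j - x k‖} = Set.univ := by
        ext x; simp [hj]
      rw [this]; exact isOpen_univ
    · have : {x : XN N | j ∈ P0 → k ∉ P0 → ρ < ‖x j - x k‖} = Set.univ := by
        ext x; simp [hj]
      rw [this]; exact isOpen_univ

/- ======== derivative of a single Coulomb term ======== -/

noncomputable def seedMon : Mon E3 := ⟨1, [], 1⟩

noncomputable def DtCLM {N : ℕ} (Z : ℝ) (t : TermIdx N) (x : XN N) : XN N →L[ℝ] ℝ :=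
  cT N Z t • ((Mon.SD (ellT t x) seedMon).comp (ellT t))

lemma term_hasFDerivAt {N : ℕ} (Z : ℝ) (t : TermIdx N) (x : XN N)
    (h : cT N Z t ≠ 0 → ellT t x ≠ 0) :
    HasFDerivAt (fun y : XN N => cT N Z t * ‖ellT t y‖⁻¹) (DtCLM Z t x) x := by
  by_cases hc : cT N Z t = 0
  · simp only [hc, zero_mul, DtCLM, zero_smul]
    exact hasFDerivAt_const 0 x
  · have hx := h hc
    have heval := Mon.hasFDerivAt_eval seedMon (ellT t x) hx
    have hcomp := heval.comp x (ellT t).hasFDerivAt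
    have := hcomp.const_mul (cT N Z t)
    have hfun : (fun y : XN N => cT N Z t * (Mon.eval seedMon ∘ (ellT t)) y)
        = fun y : XN N => cT N Z t * ‖ellT t y‖⁻¹ := by
      funext y
      simp only [Function.comp_apply]
      congr 1
      exact eval_seed _
    rw [hfun] at this
    exact this

/- ======== the regular part HF and its derivative ======== -/

open Classical in
noncomputable def goodF {N M : ℕ} (P : Fin M → Finset (Fin N)) : Finset (TermIdx N) :=
  Finset.univ.filter (goodT P)

lemma mem_goodF {N M : ℕ} {P : Fin M → Finset (Fin N)} {t : TermIdx N} :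
    t ∈ goodF P ↔ goodT P t := by
  simp [goodF]

noncomputable def HF {N M : ℕ} (Z : ℝ) (P : Fin M → Finset (Fin N)) (L : List (XN N)) :
    XN N → ℝ :=
  fun x => ∑ t ∈ goodF P, cT N Z t * msum (monsN (L.map (ellT t))) (ellT t x)

noncomputable def HFD {N M : ℕ} (Z : ℝ) (P : Fin M → Finset (Fin N)) (L : List (XN N))
    (x : XN N) : XN N →L[ℝ] ℝ :=
  ∑ t ∈ goodF P, cT N Z t •
    ((((monsN (L.map (ellT t))).map (Mon.SD (ellT t x))).sum).comp (ellT t))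

lemma HF_hasFDerivAt {N M : ℕ} (Z : ℝ) (P : Fin M → Finset (Fin N)) (L : List (XN N))
    (x : XN N) (hx : ∀ t, goodT P t → ellT t x ≠ 0) :
    HasFDerivAt (HF Z P L) (HFD Z P L x) x := by
  apply HasFDerivAt.fun_sum
  intro t ht
  exact ((hasFDerivAt_msum _ (hx t (mem_goodF.mp ht))).comp x (ellT t).hasFDerivAt).const_mul _

lemma HFD_apply {N M : ℕ} (Z : ℝ) (P : Fin M → Finset (Fin N)) (L : List (XN N))
    (x v : XN N) : HFD Z P L x v = HF Z P (v :: L) x := by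
  rw [HFD, HF, ContinuousLinearMap.sum_apply]
  apply Finset.sum_congr rfl
  intro t _
  rw [ContinuousLinearMap.smul_apply, ContinuousLinearMap.comp_apply, smul_eq_mul]
  congr 1
  rw [clm_list_sum_apply]
  rw [show ((v :: L).map (ellT t)) = ellT t v :: L.map (ellT t) from List.map_cons]
  rw [show monsN (ellT t v :: L.map (ellT t))
      = (monsN (L.map (ellT t))).flatMap (Mon.step (ellT t v)) from rfl]
  rw [msum_flatMap]
  congr 1
  apply List.map_congr_left
  intro μ _
  exact Mon.SD_apply μ _ _

/- ======== the key pointwise identities ======== -/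

lemma base_claim {N M : ℕ} (Z : ℝ) (P : Fin M → Finset (Fin N))
    {v : XN N} (hv : ∃ s i, v = dirVec N (P s) i) {x : XN N}
    (hx : ∀ t, goodT P t → ellT t x ≠ 0)
    (hdiff : DifferentiableAt ℝ (coulombV N Z) x) :
    fderiv ℝ (coulombV N Z) x v = HF Z P [v] x := by
  classical
  have hGn : HasFDerivAt (fun y : XN N => ∑ t ∈ (badC Z P)ᶜ, cT N Z t * ‖ellT t y‖⁻¹)
      (∑ t ∈ (badC Z P)ᶜ, DtCLM Z t x) x := by
    apply HasFDerivAt.fun_sum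
    intro t ht
    apply term_hasFDerivAt
    intro hc
    rcases Classical.em (goodT P t) with hg | hg
    · exact hx t hg
    · exact absurd (mem_badC.mpr ⟨hg, hc⟩) (Finset.mem_compl.mp ht)
  have hBp : HasFDerivAt (fun y : XN N => ∑ t ∈ badC Z P, cT N Z t * ‖ellT t y‖⁻¹)
      (fderiv ℝ (coulombV N Z) x - ∑ t ∈ (badC Z P)ᶜ, DtCLM Z t x) x := by
    have h1 := hdiff.hasFDerivAt.fun_sub hGn
    have hfun : (fun y => coulombV N Z y - ∑ t ∈ (badC Z P)ᶜ, cT N Z t * ‖ellT t y‖⁻¹)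
        = fun y : XN N => ∑ t ∈ badC Z P, cT N Z t * ‖ellT t y‖⁻¹ := by
      funext y
      rw [coulombV_eq, ← Finset.sum_add_sum_compl (badC Z P)
        (fun t => cT N Z t * ‖ellT t y‖⁻¹)]
      ring
    rwa [hfun] at h1
  have hinv : ∀ z : XN N, ∀ τ : ℝ,
      (∑ t ∈ badC Z P, cT N Z t * ‖ellT t (z + τ • v)‖⁻¹)
        = ∑ t ∈ badC Z P, cT N Z t * ‖ellT t z‖⁻¹ := by
    intro z τ
    apply Finset.sum_congr rfl
    intro t ht
    obtain ⟨s, i, rfl⟩ := hv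
    have h0 : ellT t (dirVec N (P s) i) = 0 := badT_dir_zero (mem_badC.mp ht).1 s i
    have he : ellT t (z + τ • dirVec N (P s) i) = ellT t z := by
      rw [map_add, map_smul, h0, smul_zero, add_zero]
    rw [he]
  have hkill := hasFDerivAt_inv_dir hBp hinv
  rw [ContinuousLinearMap.sub_apply, sub_eq_zero] at hkill
  rw [hkill, ContinuousLinearMap.sum_apply]
  have hsub : goodF P ⊆ (badC Z P)ᶜ := by
    intro t ht
    rw [Finset.mem_compl, mem_badC]
    rintro ⟨hng, -⟩
    exact hng (mem_goodF.mp ht)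
  have hzero : ∀ t ∈ (badC Z P)ᶜ, t ∉ goodF P → DtCLM Z t x v = 0 := by
    intro t ht htg
    have hng : ¬ goodT P t := fun hg => htg (mem_goodF.mpr hg)
    have hc : cT N Z t = 0 := by
      by_contra hc
      exact (Finset.mem_compl.mp ht) (mem_badC.mpr ⟨hng, hc⟩)
    rw [DtCLM, hc, zero_smul]
    simp
  rw [HF, ← Finset.sum_subset hsub hzero]
  apply Finset.sum_congr rfl
  intro t ht
  simp only [DtCLM, ContinuousLinearMap.smul_apply, ContinuousLinearMap.comp_apply,
    smul_eq_mul]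
  congr 1
  have hm : monsN ([v].map (ellT t)) = Mon.step (ellT t v) seedMon := by
    simp [monsN, seedMon]
  rw [hm, Mon.SD_apply]
  rfl

lemma stage {N M : ℕ} (Z : ℝ) (P : Fin M → Finset (Fin N))
    {ρ : ℝ} (hρ : 0 < ρ) (L : List (XN N)) (hne : L ≠ [])
    (hL : ∀ v ∈ L, ∃ s i, v = dirVec N (P s) i) :
    (∀ x ∈ (⋂ s, UP (P s) ρ) \ SbSet Z P,
        dchainO L (coulombV N Z) x = HF Z P L x) ∧
    (∀ x ∈ ⋂ s, UP (P s) ρ,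
        dchainO L (coulombV N Z) x = HF Z P L x ∨ dchainO L (coulombV N Z) x = 0) := by
  classical
  have hΩopen : IsOpen (⋂ s, UP (P s) ρ) :=
    isOpen_iInter_of_finite (fun s => isOpen_UP (P s) ρ)
  have hgood : ∀ x ∈ ⋂ s, UP (P s) ρ, ∀ t, goodT P t → ellT t x ≠ 0 := by
    intro x hx t hg h0
    have := goodT_norm_lb hg hx
    rw [h0, norm_zero] at this
    linarith
  induction L with
  | nil => exact absurd rfl hne
  | cons v L' ih =>
      have hv : ∃ s i, v = dirVec N (P s) i := hL v (List.mem_cons_self)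
      rcases eq_or_ne L' [] with rfl | hne'
      · -- base case : L = [v]
        have parta : ∀ x ∈ (⋂ s, UP (P s) ρ) \ SbSet Z P,
            dchainO [v] (coulombV N Z) x = HF Z P [v] x := by
          intro x hxmem
          obtain ⟨hxΩ, hxS⟩ := hxmem
          have haux : ∀ t : TermIdx N, cT N Z t ≠ 0 → ellT t x ≠ 0 := by
            intro t hc
            rcases Classical.em (goodT P t) with hg | hg
            · exact hgood x hxΩ t hg
            · intro h0
              apply hxS
              rw [SbSet]
              refine Set.mem_biUnion (mem_badC.mpr ⟨hg, hc⟩) h0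
          have hdiff : DifferentiableAt ℝ (coulombV N Z) x := by
            have hsum : HasFDerivAt (fun y : XN N => ∑ t : TermIdx N, cT N Z t * ‖ellT t y‖⁻¹)
                (∑ t : TermIdx N, DtCLM Z t x) x :=
              HasFDerivAt.fun_sum (fun t _ => term_hasFDerivAt Z t x (haux t))
            rw [show (fun y : XN N => ∑ t : TermIdx N, cT N Z t * ‖ellT t y‖⁻¹)
                = coulombV N Z from (funext (coulombV_eq Z)).symm] at hsum
            exact hsum.differentiableAt
          exact base_claim Z P hv (hgood x hxΩ) hdiff
        refine ⟨parta, ?_⟩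
        intro x hxΩ
        by_cases hxS : x ∈ SbSet Z P
        · by_cases hdiff : DifferentiableAt ℝ (coulombV N Z) x
          · exact Or.inl (base_claim Z P hv (hgood x hxΩ) hdiff)
          · right
            show fderiv ℝ (coulombV N Z) x v = 0
            rw [fderiv_zero_of_not_differentiableAt hdiff]
            simp
        · exact Or.inl (parta x ⟨hxΩ, hxS⟩)
      · -- inductive step
        obtain ⟨ihA, ihB⟩ := ih hne' (fun u hu => hL u (List.mem_cons_of_mem _ hu))
        have hopen : IsOpen ((⋂ s, UP (P s) ρ) \ SbSet Z P) :=
          hΩopen.sdiff (isClosed_SbSet Z P)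
        have parta : ∀ x ∈ (⋂ s, UP (P s) ρ) \ SbSet Z P,
            dchainO (v :: L') (coulombV N Z) x = HF Z P (v :: L') x := by
          intro x hxmem
          have hEq : dchainO L' (coulombV N Z) =ᶠ[nhds x] HF Z P L' :=
            Filter.eventuallyEq_of_mem (hopen.mem_nhds hxmem) ihA
          show fderiv ℝ (dchainO L' (coulombV N Z)) x v = _
          rw [hEq.fderiv_eq, (HF_hasFDerivAt Z P L' x (hgood x hxmem.1)).fderiv, HFD_apply]
        refine ⟨parta, ?_⟩
        intro x hxΩ
        by_cases hxS : x ∈ SbSet Z P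
        · by_cases hdiff : DifferentiableAt ℝ (dchainO L' (coulombV N Z)) x
          · left
            have hHf := HF_hasFDerivAt Z P L' x (hgood x hxΩ)
            have hg : HasFDerivAt
                (fun y => dchainO L' (coulombV N Z) y - HF Z P L' y)
                (fderiv ℝ (dchainO L' (coulombV N Z)) x - HFD Z P L' x) x :=
              hdiff.hasFDerivAt.sub hHf
            have h0 : ∀ᶠ y in nhds x, y ∉ SbSet Z P →
                (dchainO L' (coulombV N Z) y - HF Z P L' y) = 0 := by
              filter_upwards [hΩopen.mem_nhds hxΩ] with y hy hyS
              exact sub_eq_zero.mpr (ihA y ⟨hy, hyS⟩)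
            have hvan := fderiv_vanish_of_dense
              (dense_of_interior_empty (interior_SbSet Z P)) hg h0 v
            rw [ContinuousLinearMap.sub_apply, sub_eq_zero] at hvan
            show fderiv ℝ (dchainO L' (coulombV N Z)) x v = _
            rw [hvan, HFD_apply]
          · right
            show fderiv ℝ (dchainO L' (coulombV N Z)) x v = 0
            rw [fderiv_zero_of_not_differentiableAt hdiff]
            simp
        · exact Or.inl (parta x ⟨hxΩ, hxS⟩)

/- ======== uniform bound for HF ======== -/

lemma HF_abs_le {N M : ℕ} (Z : ℝ) (P : Fin M → Finset (Fin N))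
    (hP : ∀ s, (P s).Nonempty) {ρ : ℝ} (hρ : 0 < ρ) (L : List (XN N))
    (hL : ∀ v ∈ L, ∃ s i, v = dirVec N (P s) i) {x : XN N}
    (hxΩ : x ∈ ⋂ s, UP (P s) ρ) :
    |HF Z P L x| ≤ (∑ t : TermIdx N, |cT N Z t|) *
      (3 ^ L.length * (Nat.factorial L.length) * (ρ⁻¹) ^ (L.length + 1)) := by
  classical
  rw [HF]
  calc |∑ t ∈ goodF P, cT N Z t * msum (monsN (L.map (ellT t))) (ellT t x)|
      ≤ ∑ t ∈ goodF P, |cT N Z t * msum (monsN (L.map (ellT t))) (ellT t x)| :=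
        Finset.abs_sum_le_sum_abs _ _
  _ ≤ ∑ t ∈ goodF P, |cT N Z t| *
        (3 ^ L.length * (Nat.factorial L.length) * (ρ⁻¹) ^ (L.length + 1)) := by
      apply Finset.sum_le_sum
      intro t ht
      rw [abs_mul]
      apply mul_le_mul_of_nonneg_left _ (abs_nonneg _)
      have hnorm : ∀ w ∈ L.map (ellT t), ‖w‖ ≤ 1 := by
        intro w hw
        obtain ⟨u, hu, rfl⟩ := List.mem_map.mp hw
        obtain ⟨s, i, rfl⟩ := hL u hu
        exact norm_ellT_dirVec_le (hP s) t i
      have hlow : ρ < ‖ellT t x‖ := goodT_norm_lb (mem_goodF.mp ht) hxΩ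
      have := msum_abs_le hnorm hρ hlow
      rwa [List.length_map] at this
  _ ≤ (∑ t : TermIdx N, |cT N Z t|) *
        (3 ^ L.length * (Nat.factorial L.length) * (ρ⁻¹) ^ (L.length + 1)) := by
      rw [← Finset.sum_mul]
      apply mul_le_mul_of_nonneg_right _ (by positivity)
      exact Finset.sum_le_sum_of_subset_of_nonneg (Finset.subset_univ _)
        (fun t _ _ => abs_nonneg _)

/- ======== from pderivPFamily to dchainO ======== -/

noncomputable def multiList {N : ℕ} (P0 : Finset (Fin N)) (α : Fin 3 → ℕ) : List (XN N) :=
  List.replicate (α 0) (dirVec N P0 0) ++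
    (List.replicate (α 1) (dirVec N P0 1) ++ List.replicate (α 2) (dirVec N P0 2))

lemma pderivPMulti_eq {N : ℕ} (P0 : Finset (Fin N)) (α : Fin 3 → ℕ)
    (f : XN N → ℝ) : pderivPMulti P0 α f = dchainO (multiList P0 α) f := by
  show (pderivVec (dirVec N P0 0))^[α 0]
      ((pderivVec (dirVec N P0 1))^[α 1] ((pderivVec (dirVec N P0 2))^[α 2] f)) = _
  rw [iterate_pderivVec, iterate_pderivVec, iterate_pderivVec,
    ← dchainO_append, ← dchainO_append, List.append_assoc]
  rfl

lemma multiList_length {N : ℕ} (P0 : Finset (Fin N)) (α : Fin 3 → ℕ) :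
    (multiList P0 α).length = ∑ i, α i := by
  simp [multiList, Fin.sum_univ_three]
  omega

lemma multiList_mem {N : ℕ} (P0 : Finset (Fin N)) (α : Fin 3 → ℕ) {v : XN N}
    (hv : v ∈ multiList P0 α) : ∃ i, v = dirVec N P0 i := by
  rw [multiList] at hv
  rcases List.mem_append.mp hv with h | h
  · exact ⟨0, (List.eq_of_mem_replicate h)⟩
  · rcases List.mem_append.mp h with h' | h'
    · exact ⟨1, (List.eq_of_mem_replicate h')⟩
    · exact ⟨2, (List.eq_of_mem_replicate h')⟩

noncomputable def famList {N : ℕ} :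
    (M : ℕ) → (Fin M → Finset (Fin N)) → (Fin M → Fin 3 → ℕ) → List (XN N)
  | 0, _, _ => []
  | M + 1, P, α => multiList (P 0) (α 0) ++ famList M (P ∘ Fin.succ) (α ∘ Fin.succ)

lemma pderivPFamily_eq {N : ℕ} :
    ∀ (M : ℕ) (P : Fin M → Finset (Fin N)) (α : Fin M → Fin 3 → ℕ) (f : XN N → ℝ),
      pderivPFamily M P α f = dchainO (famList M P α) f := by
  intro M
  induction M with
  | zero => intro P α f; rfl
  | succ M ih =>
      intro P α f
      show pderivPMulti (P 0) (α 0) (pderivPFamily M (P ∘ Fin.succ) (α ∘ Fin.succ) f) = _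
      rw [ih, pderivPMulti_eq, ← dchainO_append]
      rfl

lemma famList_length {N : ℕ} :
    ∀ (M : ℕ) (P : Fin M → Finset (Fin N)) (α : Fin M → Fin 3 → ℕ),
      (famList M P α).length = ∑ s, ∑ i, α s i := by
  intro M
  induction M with
  | zero => intro P α; simp [famList]
  | succ M ih =>
      intro P α
      show (multiList (P 0) (α 0) ++ famList M (P ∘ Fin.succ) (α ∘ Fin.succ)).length = _
      rw [List.length_append, multiList_length, ih,
        Fin.sum_univ_succ (f := fun s : Fin (M+1) => ∑ i, α s i)]
      rfl

lemma famList_mem {N : ℕ} :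
    ∀ (M : ℕ) (P : Fin M → Finset (Fin N)) (α : Fin M → Fin 3 → ℕ) (v : XN N),
      v ∈ famList M P α → ∃ s i, v = dirVec N (P s) i := by
  intro M
  induction M with
  | zero => intro P α v hv; simp [famList] at hv
  | succ M ih =>
      intro P α v hv
      rw [show famList (M+1) P α
          = multiList (P 0) (α 0) ++ famList M (P ∘ Fin.succ) (α ∘ Fin.succ) from rfl] at hv
      rcases List.mem_append.mp hv with h | h
      · obtain ⟨i, hi⟩ := multiList_mem (P 0) (α 0) h
        exact ⟨0, i, hi⟩
      · obtain ⟨s, i, hi⟩ := ih (P ∘ Fin.succ) (α ∘ Fin.succ) v h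
        exact ⟨s.succ, i, hi⟩

end MainDev

end CoulombAux

/-- Analyticity estimates for the Coulomb potential: for each `ε > 0` there is
`L_V > 0` such that `|∂^α_{x_𝐏} V| ≤ L_V^{|α|+1} |α|!` on `∩_s U_{P_s}(ε/2)`
for all multiindices `α` with `|α| ≥ 1`. -/
theorem coulombV_derivative_bound (N M : ℕ) (Z : ℝ) (hZ : 0 ≤ Z)
    (P : Fin M → Finset (Fin N)) (hP : ∀ s, (P s).Nonempty)
    (ε : ℝ) (hε : 0 < ε) :
    ∃ L > 0, ∀ α : Fin M → Fin 3 → ℕ, 1 ≤ ∑ s, ∑ i, α s i →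
      ∀ x ∈ ⋂ s, UP (P s) (ε / 2),
        |pderivPFamily M P α (coulombV N Z) x|
          ≤ L ^ ((∑ s, ∑ i, α s i) + 1) * Nat.factorial (∑ s, ∑ i, α s i) := by
  classical
  have hρ : 0 < ε / 2 := by linarith
  set CT := ∑ t : TermIdx N, |cT N Z t| with hCT
  have hCT0 : 0 ≤ CT := Finset.sum_nonneg (fun t _ => abs_nonneg _)
  have hinv : 0 < (ε/2)⁻¹ := inv_pos.mpr hρ
  have hLpos : 0 < 3 * (1 + CT) * (1 + (ε/2)⁻¹) := by nlinarith
  refine ⟨3 * (1 + CT) * (1 + (ε/2)⁻¹), hLpos, ?_⟩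
  intro α hα x hx
  set n := ∑ s, ∑ i, α s i with hn
  have hlen : (famList M P α).length = n := famList_length M P α
  have hne : famList M P α ≠ [] := by
    intro h
    rw [h] at hlen
    simp at hlen
    omega
  have hmem : ∀ v ∈ famList M P α, ∃ s i, v = dirVec N (P s) i :=
    fun v hv => famList_mem M P α v hv
  rw [show pderivPFamily M P α (coulombV N Z) = dchainO (famList M P α) (coulombV N Z)
    from pderivPFamily_eq M P α _]
  rcases (stage Z P hρ (famList M P α) hne hmem).2 x hx with hcase | hcase
  · rw [hcase]
    have hb := HF_abs_le Z P hP hρ (famList M P α) hmem hx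
    rw [hlen] at hb
    refine hb.trans ?_
    have key : CT * (3 ^ n * ((ε/2)⁻¹) ^ (n+1))
        ≤ (3 * (1 + CT) * (1 + (ε/2)⁻¹)) ^ (n+1) := by
      have k1 : CT ≤ (1 + CT) ^ (n+1) :=
        le_trans (by linarith) (le_self_pow₀ (by linarith) (Nat.succ_ne_zero n))
      have k2 : (3:ℝ)^n ≤ 3^(n+1) := pow_le_pow_right₀ (by norm_num) (Nat.le_succ n)
      have k3 : ((ε/2)⁻¹)^(n+1) ≤ (1+(ε/2)⁻¹)^(n+1) :=
        pow_le_pow_left₀ (by positivity) (by linarith) _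
      calc CT * (3^n * ((ε/2)⁻¹)^(n+1))
          ≤ (1+CT)^(n+1) * (3^(n+1) * (1+(ε/2)⁻¹)^(n+1)) := by
            apply mul_le_mul k1 (mul_le_mul k2 k3 (by positivity) (by positivity))
              (by positivity) (by positivity)
      _ = (3*(1+CT)*(1+(ε/2)⁻¹))^(n+1) := by rw [mul_pow, mul_pow]; ring
    calc CT * (3^n * (Nat.factorial n) * ((ε/2)⁻¹)^(n+1))
        = (CT * (3^n * ((ε/2)⁻¹)^(n+1))) * (Nat.factorial n) := by ring
    _ ≤ (3*(1+CT)*(1+(ε/2)⁻¹))^(n+1) * (Nat.factorial n) :=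
        mul_le_mul_of_nonneg_right key (Nat.cast_nonneg _)
  · rw [hcase, abs_zero]
    exact mul_nonneg (pow_nonneg hLpos.le _) (Nat.cast_nonneg _)
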